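/- Let m ≥ 2 and t_0 < t_1 < ... < t_m be real numbers, and let g be defined at these points and satisfy (-1)^{m-i}(g(t_i) - g(t_{i-1})) ≥ 0 for all 1 ≤ i ≤ m. Then |[t_0, ..., t_m; g]| = ( |[t_1, ..., t_m; g]| + |[t_0, ..., t_{m-1}; g]| ) / (t_m - t_0). -/

import Mathlib

/-- Divided difference of order `m` of `g` at knots `t 0, …, t m`. -/
noncomputable def divDiff (m : ℕ) (t : ℕ → ℝ) (g : ℝ → ℝ) : ℝ :=
  ∑ i ∈ Finset.range (m + 1),
    g (t i) / ∏ j ∈ (Finset.range (m + 1)).erase i, (t i - t j)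

lemma mono_aux (t : ℕ → ℝ) (n : ℕ) (ht : ∀ i < n, t i < t (i + 1)) :
    ∀ i j, i < j → j ≤ n → t i < t j := by
  intro i j
  induction j with
  | zero => omega
  | succ j ih =>
    intro hij hjn
    rcases Nat.lt_or_ge i j with h | h
    · exact lt_trans (ih h (by omega)) (ht j (by omega))
    · have hij' : i = j := by omega
      subst hij'
      exact ht i (by omega)

lemma erase_succ_eq (k i : ℕ) (hi : i < k + 1) :
    (Finset.range (k + 2)).erase (i + 1) =
      insert 0 (((Finset.range (k + 1)).erase i).image (· + 1)) := by
  ext j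
  simp only [Finset.mem_erase, Finset.mem_range, Finset.mem_insert, Finset.mem_image]
  constructor
  · rintro ⟨hne, hltj⟩
    rcases Nat.eq_zero_or_pos j with h0 | h0
    · exact Or.inl h0
    · exact Or.inr ⟨j - 1, ⟨by omega, by omega⟩, by omega⟩
  · rintro (rfl | ⟨a, ⟨ha1, ha2⟩, rfl⟩) <;> omega

lemma erase_lt_eq (k i : ℕ) (hi : i < k + 1) :
    (Finset.range (k + 2)).erase i =
      insert (k + 1) ((Finset.range (k + 1)).erase i) := by
  ext j
  simp only [Finset.mem_erase, Finset.mem_range, Finset.mem_insert]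
  omega

lemma divDiff_rec (k : ℕ) (t : ℕ → ℝ) (g : ℝ → ℝ)
    (ht : ∀ i < k + 1, t i < t (i + 1)) :
    divDiff (k + 1) t g * (t (k + 1) - t 0) =
      divDiff k (fun i => t (i + 1)) g - divDiff k t g := by
  have hlt : ∀ i j, i < j → j ≤ k + 1 → t i < t j := mono_aux t (k + 1) ht
  have term1 : divDiff k (fun i => t (i + 1)) g =
      ∑ i ∈ Finset.range (k + 2),
        (t i - t 0) * g (t i) / ∏ j ∈ (Finset.range (k + 2)).erase i, (t i - t j) := by
    rw [Finset.sum_range_succ']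
    simp only [sub_self, zero_mul, zero_div, add_zero]
    unfold divDiff
    refine Finset.sum_congr rfl fun i hi => ?_
    simp only [Finset.mem_range] at hi
    have hP : ∏ j ∈ (Finset.range (k + 2)).erase (i + 1), (t (i + 1) - t j)
        = (t (i + 1) - t 0) *
          ∏ j ∈ (Finset.range (k + 1)).erase i, (t (i + 1) - t (j + 1)) := by
      rw [erase_succ_eq k i hi, Finset.prod_insert (by simp),
        Finset.prod_image (by intro a _ b _ h; simp only at h; omega)]
    simp only []
    rw [hP, mul_div_mul_left _ _ (ne_of_gt (sub_pos.mpr (hlt 0 (i + 1) (by omega) (by omega))))]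
  have term2 : divDiff k t g =
      ∑ i ∈ Finset.range (k + 2),
        (t i - t (k + 1)) * g (t i) / ∏ j ∈ (Finset.range (k + 2)).erase i, (t i - t j) := by
    rw [Finset.sum_range_succ]
    simp only [sub_self, zero_mul, zero_div, add_zero]
    unfold divDiff
    refine Finset.sum_congr rfl fun i hi => ?_
    simp only [Finset.mem_range] at hi
    have hP : ∏ j ∈ (Finset.range (k + 2)).erase i, (t i - t j)
        = (t i - t (k + 1)) * ∏ j ∈ (Finset.range (k + 1)).erase i, (t i - t j) := by
      rw [erase_lt_eq k i hi, Finset.prod_insert (by simp)]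
    rw [hP, mul_div_mul_left _ _ (ne_of_lt (sub_neg.mpr (hlt i (k + 1) hi (le_refl _))))]
  rw [term1, term2, ← Finset.sum_sub_distrib]
  unfold divDiff
  rw [Finset.sum_mul]
  refine Finset.sum_congr rfl fun i hi => ?_
  ring

lemma divDiff_nonneg : ∀ (k : ℕ), 1 ≤ k → ∀ (t : ℕ → ℝ) (g : ℝ → ℝ),
    (∀ i < k, t i < t (i + 1)) →
    (∀ i, 1 ≤ i → i ≤ k → 0 ≤ (-1 : ℝ) ^ (k - i) * (g (t i) - g (t (i - 1)))) →
    0 ≤ divDiff k t g := by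
  intro k
  induction k with
  | zero => omega
  | succ k ih =>
    intro hk t g ht hg
    rcases Nat.eq_zero_or_pos k with rfl | hk1
    · -- base case: k + 1 = 1
      have h01 : t 0 < t 1 := ht 0 (by omega)
      have hΔ : 0 ≤ g (t 1) - g (t 0) := by
        have := hg 1 le_rfl le_rfl
        simpa using this
      have e0 : (Finset.range 2).erase 0 = {1} := by decide
      have e1 : (Finset.range 2).erase 1 = {0} := by decide
      have key : divDiff 1 t g = (g (t 1) - g (t 0)) / (t 1 - t 0) := by
        unfold divDiff
        rw [Finset.sum_range_succ, Finset.sum_range_one, e0, e1,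
          Finset.prod_singleton, Finset.prod_singleton]
        have hne : t 1 - t 0 ≠ 0 := sub_ne_zero.mpr (ne_of_gt h01)
        have hne' : t 0 - t 1 ≠ 0 := sub_ne_zero.mpr (ne_of_lt h01)
        field_simp
        ring
      rw [key]
      exact div_nonneg hΔ (le_of_lt (sub_pos.mpr h01))
    · -- inductive step: k ≥ 1
      have hlt : ∀ i j, i < j → j ≤ k + 1 → t i < t j := mono_aux t (k + 1) ht
      have hA : 0 ≤ divDiff k (fun i => t (i + 1)) g := by
        refine ih hk1 _ g (fun i hi => ht (i + 1) (by omega)) ?_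
        intro i h1 h2
        have h := hg (i + 1) (by omega) (by omega)
        have e1 : k + 1 - (i + 1) = k - i := by omega
        have e2 : i + 1 - 1 = i := by omega
        rw [e1, e2] at h
        have e3 : i - 1 + 1 = i := by omega
        simpa [e3] using h
      have hB : divDiff k t g ≤ 0 := by
        have hneg : divDiff k t (fun x => -(g x)) = - divDiff k t g := by
          simp [divDiff, neg_div, Finset.sum_neg_distrib]
        have h0 : 0 ≤ divDiff k t (fun x => -(g x)) := by
          refine ih hk1 t _ (fun i hi => ht i (by omega)) ?_
          intro i h1 h2
          have h := hg i h1 (by omega)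
          have e : k + 1 - i = (k - i) + 1 := by omega
          rw [e, pow_succ] at h
          have e2 : (-1 : ℝ) ^ (k - i) * (-(g (t i)) - -(g (t (i - 1))))
              = (-1 : ℝ) ^ (k - i) * (-1) * (g (t i) - g (t (i - 1))) := by ring
          show 0 ≤ (-1 : ℝ) ^ (k - i) * (-(g (t i)) - -(g (t (i - 1))))
          rw [e2]
          exact h
        linarith
      have hrec := divDiff_rec k t g ht
      have hpos : 0 < t (k + 1) - t 0 := sub_pos.mpr (hlt 0 (k + 1) (by omega) le_rfl)
      have h0 : 0 * (t (k + 1) - t 0) ≤ divDiff (k + 1) t g * (t (k + 1) - t 0) := by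
        rw [zero_mul, hrec]
        linarith
      exact le_of_mul_le_mul_right h0 hpos

theorem stmt2 (m : ℕ) (hm : 2 ≤ m) (t : ℕ → ℝ) (g : ℝ → ℝ)
    (ht : ∀ i < m, t i < t (i + 1))
    (hg : ∀ i, 1 ≤ i → i ≤ m → 0 ≤ (-1 : ℝ) ^ (m - i) * (g (t i) - g (t (i - 1)))) :
    |divDiff m t g| =
      (|divDiff (m - 1) (fun i => t (i + 1)) g| + |divDiff (m - 1) t g|) / (t m - t 0) := by
  obtain ⟨k, rfl⟩ : ∃ k, m = k + 2 := ⟨m - 2, by omega⟩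
  have hm1 : k + 2 - 1 = k + 1 := by omega
  rw [hm1]
  have hlt : ∀ i j, i < j → j ≤ k + 2 → t i < t j := mono_aux t (k + 2) ht
  have hA : 0 ≤ divDiff (k + 1) (fun i => t (i + 1)) g := by
    refine divDiff_nonneg (k + 1) (by omega) _ g (fun i hi => ht (i + 1) (by omega)) ?_
    intro i h1 h2
    have h := hg (i + 1) (by omega) (by omega)
    have e1 : k + 2 - (i + 1) = k + 1 - i := by omega
    have e2 : i + 1 - 1 = i := by omega
    rw [e1, e2] at h
    have e3 : i - 1 + 1 = i := by omega
    simpa [e3] using h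
  have hB : divDiff (k + 1) t g ≤ 0 := by
    have hneg : divDiff (k + 1) t (fun x => -(g x)) = - divDiff (k + 1) t g := by
      simp [divDiff, neg_div, Finset.sum_neg_distrib]
    have h0 : 0 ≤ divDiff (k + 1) t (fun x => -(g x)) := by
      refine divDiff_nonneg (k + 1) (by omega) t _ (fun i hi => ht i (by omega)) ?_
      intro i h1 h2
      have h := hg i h1 (by omega)
      have e : k + 2 - i = (k + 1 - i) + 1 := by omega
      rw [e, pow_succ] at h
      have e2 : (-1 : ℝ) ^ (k + 1 - i) * (-(g (t i)) - -(g (t (i - 1))))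
          = (-1 : ℝ) ^ (k + 1 - i) * (-1) * (g (t i) - g (t (i - 1))) := by ring
      show 0 ≤ (-1 : ℝ) ^ (k + 1 - i) * (-(g (t i)) - -(g (t (i - 1))))
      rw [e2]
      exact h
    linarith
  have hrec := divDiff_rec (k + 1) t g ht
  have hpos : 0 < t (k + 2) - t 0 := sub_pos.mpr (hlt 0 (k + 2) (by omega) le_rfl)
  have hD : divDiff (k + 2) t g =
      (divDiff (k + 1) (fun i => t (i + 1)) g - divDiff (k + 1) t g) / (t (k + 2) - t 0) := by
    rw [eq_div_iff (ne_of_gt hpos)]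
    exact hrec
  rw [hD, abs_of_nonneg (div_nonneg (by linarith) hpos.le),
    abs_of_nonneg hA, abs_of_nonpos hB]
  ring
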